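/- Suppose B₀* B₀ and Σ₀ are simultaneously diagonalizable with eigenvalues of Σ₀ equal to λ_i = i^{-(1+2ε)} and eigenvalues of B₀^* B₀ denoted μ_i with C^{-2} i^{-(1+2ε+2p)} ≤ μ_i ≤ C² i^{-(1+2ε+2p)}. Then there is a constant C' such that for all n ≥ 1 and α > 0, Σ_{i=1}^∞ (1/α²) · i^{-(1+2ε+2p)-(1+2ε)} / (1 + (n/α) i^{-(1+2ε+2p)})² ≤ C' · (1/(nα)) · (n/α)^{-2ε/(1+2ε+2p)}. -/

import Mathlib

open Finset

/-- Bernoulli-type difference bound. -/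
private lemma bern_diff {γ x : ℝ} (hγ : 1 ≤ γ) (hx : 1 ≤ x) :
    γ * (2 * x) ^ (-(γ + 1)) ≤ x ^ (-γ) - (x + 1) ^ (-γ) := by
  have hx0 : (0:ℝ) < x := by linarith
  have hx1 : (0:ℝ) < x + 1 := by linarith
  have hxg : (0:ℝ) < x ^ γ := Real.rpow_pos_of_pos hx0 γ
  have hx1g : (0:ℝ) < (x+1) ^ γ := Real.rpow_pos_of_pos hx1 γ
  have h2x : (0:ℝ) < (2*x) ^ (γ+1) := Real.rpow_pos_of_pos (by linarith) _
  have hbern : 1 + γ * (1/x) ≤ (1 + 1/x) ^ γ :=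
    one_add_mul_self_le_rpow_one_add (le_trans (by norm_num : (-1:ℝ) ≤ 0) (by positivity)) hγ
  have h1 : x ^ γ * (1 + γ * (1/x)) ≤ (x+1) ^ γ := by
    calc x ^ γ * (1 + γ * (1/x)) ≤ x ^ γ * (1 + 1/x) ^ γ :=
          mul_le_mul_of_nonneg_left hbern hxg.le
      _ = (x * (1 + 1/x)) ^ γ := (Real.mul_rpow hx0.le (by positivity)).symm
      _ = (x+1) ^ γ := by field_simp
  have h2 : x^γ + γ * x^γ / x ≤ (x+1)^γ := by
    have : x ^ γ * (1 + γ * (1/x)) = x^γ + γ * x^γ / x := by ring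
    linarith [h1, this]
  have h6 : x * (x+1)^γ ≤ (2*x)^(γ+1) := by
    have e : (2*x)^(γ+1) = (2*x)^γ * (2*x) := by
      rw [Real.rpow_add (by linarith), Real.rpow_one]
    have h7 : (x+1)^γ ≤ (2*x)^γ := Real.rpow_le_rpow hx1.le (by linarith) (by linarith)
    nlinarith [h2x.le, hx1g.le]
  rw [Real.rpow_neg hx0.le, Real.rpow_neg hx1.le, Real.rpow_neg (by positivity : (0:ℝ) ≤ 2*x)]
  have h3 : (x^γ)⁻¹ - ((x+1)^γ)⁻¹ = ((x+1)^γ - x^γ) / (x^γ * (x+1)^γ) := by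
    field_simp
  rw [h3, mul_comm γ, ← div_eq_inv_mul, div_le_div_iff₀ h2x (by positivity)]
  have hfac : γ * x^γ / x * (x * (x+1)^γ) = γ * (x^γ * (x+1)^γ) := by
    field_simp
  have hq : (0:ℝ) ≤ γ * x^γ / x := by positivity
  have := mul_le_mul (by linarith : γ * x^γ / x ≤ (x+1)^γ - x^γ) h6
    (by positivity) (by linarith [h2, hq] : (0:ℝ) ≤ (x+1)^γ - x^γ)
  calc γ * (x^γ * (x+1)^γ) = γ * x^γ / x * (x * (x+1)^γ) := hfac.symm
    _ ≤ ((x+1)^γ - x^γ) * ((2*x)^(γ+1)) := this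

private lemma telescope_sum (a : ℕ → ℝ) (N : ℕ) :
    ∀ m, N ≤ m → ∑ k ∈ range m, (if N ≤ k then a k - a (k+1) else 0) = a N - a m := by
  intro m hm
  induction m, hm using Nat.le_induction with
  | base =>
    rw [Finset.sum_eq_zero, sub_self]
    intro k hk
    rw [if_neg (by simpa using Finset.mem_range.mp hk)]
  | succ m hm ih => rw [Finset.sum_range_succ, ih, if_pos hm]; ring

private lemma head_sum_le {c : ℝ} (hc : 0 ≤ c) (N m : ℕ) :
    ∑ k ∈ range m, (if k < N then c else 0) ≤ N * c := by
  rw [← Finset.sum_filter]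
  rw [Finset.sum_const, nsmul_eq_mul]
  have hsub : (range m).filter (· < N) ⊆ range N := fun k hk =>
    Finset.mem_range.mpr (Finset.mem_filter.mp hk).2
  have := Finset.card_le_card hsub
  rw [Finset.card_range] at this
  exact mul_le_mul_of_nonneg_right (by exact_mod_cast this) hc

private lemma key_series (ε p : ℝ) (hε : 0 < ε) (hp : 0 < p) :
    ∃ K : ℝ, 0 < K ∧ ∀ t : ℝ, 0 < t →
      (∑' n : ℕ, ((n:ℝ)+1) ^ (-(1+2*ε+2*p)-(1+2*ε)) /
          (1 + t * ((n:ℝ)+1) ^ (-(1+2*ε+2*p)))^2)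
        ≤ K * t ^ ((1+2*ε+2*p)⁻¹ * -((1+2*ε+2*p)+2*ε)) := by
  set s : ℝ := 1+2*ε+2*p with hs
  set β : ℝ := s + (1+2*ε) with hβ
  set γ : ℝ := s + 2*ε with hγdef
  have hs1 : 1 < s := by rw [hs]; linarith
  have hs0 : (0:ℝ) < s := by linarith
  have hβ2 : 2 ≤ β := by rw [hβ]; linarith
  have hγ1 : 1 ≤ γ := by rw [hγdef]; linarith
  have hβγ : β = γ + 1 := by rw [hβ, hγdef]; ring
  have hexp : -(1+2*ε+2*p)-(1+2*ε) = -β := by rw [hβ, hs]; ring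
  have hsum : Summable (fun n : ℕ => ((n:ℝ)+1) ^ (-β)) := by
    have h0 : Summable (fun n : ℕ => ((n:ℝ)) ^ (-β)) :=
      Real.summable_nat_rpow.mpr (by linarith)
    have := (summable_nat_add_iff 1).mpr h0
    simpa using this
  set K₀ : ℝ := ∑' n : ℕ, ((n:ℝ)+1) ^ (-β) with hK₀def
  have hK₀ : 0 ≤ K₀ := tsum_nonneg fun n => by positivity
  set c₁ : ℝ := (2:ℝ)^β / γ with hc₁
  have hc₁0 : 0 ≤ c₁ := by rw [hc₁]; positivity
  refine ⟨K₀ + (2:ℝ)^(1+2*p) + c₁ + 1, by positivity, fun t ht => ?_⟩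
  rw [hexp]
  set X : ℝ := s⁻¹ * -(s+2*ε) with hX
  have hXγ : X = s⁻¹ * -γ := by rw [hX, hγdef]
  have hX0 : X ≤ 0 := by
    rw [hXγ]
    apply mul_nonpos_of_nonneg_of_nonpos (by positivity) (by linarith)
  have htX : (0:ℝ) < t ^ X := Real.rpow_pos_of_pos ht _
  have hden : ∀ n : ℕ, 1 ≤ 1 + t * ((n:ℝ)+1) ^ (-s) := fun n =>
    le_add_of_nonneg_right (by positivity)
  set f : ℕ → ℝ := fun n => ((n:ℝ)+1) ^ (-β) / (1 + t * ((n:ℝ)+1) ^ (-s))^2 with hf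
  have hf0 : ∀ n, 0 ≤ f n := fun n => by rw [hf]; positivity
  have hfle : ∀ n, f n ≤ ((n:ℝ)+1) ^ (-β) := fun n => by
    rw [hf]
    exact div_le_self (by positivity) (one_le_pow₀ (hden n))
  have hsumf : Summable f := Summable.of_nonneg_of_le hf0 hfle hsum
  rcases le_or_gt t 1 with h1t | h1t
  · have ht1 : 1 ≤ t ^ X :=
      Real.one_le_rpow_of_pos_of_le_one_of_nonpos ht h1t hX0
    calc ∑' n, f n ≤ K₀ := Summable.tsum_le_tsum hfle hsumf hsum
      _ ≤ K₀ * t ^ X := le_mul_of_one_le_right hK₀ ht1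
      _ ≤ (K₀ + (2:ℝ)^(1+2*p) + c₁ + 1) * t ^ X := by
          apply mul_le_mul_of_nonneg_right _ htX.le
          have : (0:ℝ) < (2:ℝ)^(1+2*p) := by positivity
          linarith
  · -- t > 1
    set r : ℝ := t ^ s⁻¹ with hr
    have hr1 : 1 ≤ r := Real.one_le_rpow h1t.le (by positivity)
    have hr0 : (0:ℝ) < r := by linarith
    set N : ℕ := ⌈r⌉₊ with hNdef
    have hrN : r ≤ (N:ℝ) := Nat.le_ceil r
    have hN1 : 1 ≤ N := Nat.one_le_ceil_iff.mpr (by linarith)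
    have hN0 : (0:ℝ) < (N:ℝ) := by exact_mod_cast hN1
    have hNr : (N:ℝ) ≤ 2*r := by
      have := Nat.ceil_lt_add_one (by linarith : (0:ℝ) ≤ r)
      rw [← hNdef] at this
      linarith
    set a : ℕ → ℝ := fun k => ((k:ℝ)+1) ^ (-γ) with ha
    have ha0 : ∀ k, 0 ≤ a k := fun k => by rw [ha]; positivity
    -- termwise bound
    have hbound : ∀ k, f k ≤ (if k < N then (N:ℝ)^(2*p) / t^2 else 0) +
        (if N ≤ k then c₁ * (a k - a (k+1)) else 0) := by
      intro k
      set x : ℝ := (k:ℝ)+1 with hx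
      have hx1 : 1 ≤ x := by
        rw [hx]; linarith [(Nat.cast_nonneg k : (0:ℝ) ≤ k)]
      have hx0 : (0:ℝ) < x := by linarith
      rcases lt_or_ge k N with hk | hk
      · rw [if_pos hk, if_neg (not_le.mpr hk), add_zero]
        have hxs : (0:ℝ) < x ^ (-s) := Real.rpow_pos_of_pos hx0 _
        have step1 : f k ≤ x ^ (-β) / (t * x ^ (-s))^2 := by
          rw [hf]
          apply div_le_div_of_nonneg_left (by positivity) (by positivity)
          apply pow_le_pow_left₀ (by positivity)
          linarith [mul_pos ht hxs]
        have e3 : x ^ (2*p) * x ^ (-s) * x ^ (-s) = x ^ (-β) := by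
          rw [← Real.rpow_add hx0, ← Real.rpow_add hx0]
          congr 1
          rw [hβ, hs]; ring
        have step2 : x ^ (-β) / (t * x ^ (-s))^2 = x ^ (2*p) / t^2 := by
          rw [← e3, mul_pow, sq (x ^ (-s))]
          field_simp
        have step3 : x ^ (2*p) ≤ (N:ℝ) ^ (2*p) := by
          apply Real.rpow_le_rpow hx0.le _ (by positivity)
          rw [hx]
          have : (k:ℝ) + 1 ≤ (N:ℝ) := by exact_mod_cast hk
          linarith
        calc f k ≤ x ^ (-β) / (t * x ^ (-s))^2 := step1
          _ = x ^ (2*p) / t^2 := step2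
          _ ≤ (N:ℝ)^(2*p) / t^2 := by gcongr
      · rw [if_neg (not_lt.mpr hk), if_pos hk, zero_add]
        have hb := bern_diff hγ1 hx1
        have e4 : (2*x) ^ (-(γ+1)) = (2:ℝ)^(-β) * x ^ (-β) := by
          rw [← hβγ, Real.mul_rpow (by norm_num) hx0.le]
        have e5 : a k - a (k+1) = x ^ (-γ) - (x+1) ^ (-γ) := by
          rw [ha, hx]
          push_cast
          ring_nf
        have h2β : (0:ℝ) < (2:ℝ)^β := by positivity
        have hγ0 : (0:ℝ) < γ := by linarith
        have e6 : (2:ℝ)^(-β) = ((2:ℝ)^β)⁻¹ := by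
          rw [Real.rpow_neg (by norm_num)]
        have key : x ^ (-β) ≤ c₁ * (a k - a (k+1)) := by
          rw [e5, hc₁]
          rw [e4, e6] at hb
          have hb' := mul_le_mul_of_nonneg_left hb (div_nonneg h2β.le hγ0.le)
          calc x ^ (-β) = (2:ℝ)^β/γ * (γ * (((2:ℝ)^β)⁻¹ * x ^ (-β))) := by
                field_simp
            _ ≤ _ := hb'
        have : f k ≤ x ^ (-β) := hfle k
        linarith [key]
    have hpsum : ∀ m : ℕ, ∑ k ∈ range m, f k ≤
        (N:ℝ) * ((N:ℝ)^(2*p) / t^2) + c₁ * a N := by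
      intro m
      calc ∑ k ∈ range m, f k
          ≤ ∑ k ∈ range m, ((if k < N then (N:ℝ)^(2*p) / t^2 else 0) +
            (if N ≤ k then c₁ * (a k - a (k+1)) else 0)) :=
            Finset.sum_le_sum fun k _ => hbound k
        _ = (∑ k ∈ range m, (if k < N then (N:ℝ)^(2*p) / t^2 else 0)) +
            ∑ k ∈ range m, (if N ≤ k then c₁ * (a k - a (k+1)) else 0) :=
            Finset.sum_add_distrib
        _ ≤ (N:ℝ) * ((N:ℝ)^(2*p) / t^2) + c₁ * a N := by
            apply add_le_add (head_sum_le (by positivity) N m)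
            have e : ∑ k ∈ range m, (if N ≤ k then c₁ * (a k - a (k+1)) else 0)
                = c₁ * ∑ k ∈ range m, (if N ≤ k then (a k - a (k+1)) else 0) := by
              rw [Finset.mul_sum]
              refine Finset.sum_congr rfl fun k _ => ?_
              split <;> simp
            rw [e]
            apply mul_le_mul_of_nonneg_left _ hc₁0
            rcases le_or_gt N m with hNm | hNm
            · rw [telescope_sum a N m hNm]
              linarith [ha0 m]
            · rw [Finset.sum_eq_zero]
              · exact ha0 N
              · intro k hk
                rw [if_neg]
                have := Finset.mem_range.mp hk
                omega
    have htsum : ∑' n, f n ≤ (N:ℝ) * ((N:ℝ)^(2*p) / t^2) + c₁ * a N :=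
      Real.tsum_le_of_sum_range_le hf0 hpsum
    have hhead : (N:ℝ) * ((N:ℝ)^(2*p) / t^2) ≤ (2:ℝ)^(1+2*p) * t ^ X := by
      have e1 : (N:ℝ) * (N:ℝ)^(2*p) = (N:ℝ)^(1+2*p) := by
        rw [Real.rpow_add hN0, Real.rpow_one]
      have e2 : (N:ℝ)^(1+2*p) ≤ (2*r)^(1+2*p) :=
        Real.rpow_le_rpow hN0.le hNr (by positivity)
      have e3 : ((2:ℝ)*r)^(1+2*p) = (2:ℝ)^(1+2*p) * r^(1+2*p) :=
        Real.mul_rpow (by norm_num) hr0.le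
      have e4 : r^(1+2*p) = t ^ (s⁻¹ * (1+2*p)) := by
        rw [hr, ← Real.rpow_mul ht.le]
      have ht2 : (t:ℝ)^2 = t ^ (2:ℝ) := by
        rw [← Real.rpow_natCast t 2]; norm_num
      have e5 : t ^ (s⁻¹ * (1+2*p)) / t^2 = t ^ X := by
        rw [ht2, ← Real.rpow_sub ht]
        congr 1
        rw [hX, hs]
        have hne : (1+2*ε+2*p) ≠ 0 := by positivity
        field_simp
        ring
      calc (N:ℝ) * ((N:ℝ)^(2*p) / t^2) = (N:ℝ)^(1+2*p)/t^2 := by rw [← e1]; ring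
        _ ≤ (2*r)^(1+2*p)/t^2 := by gcongr
        _ = (2:ℝ)^(1+2*p) * (t ^ (s⁻¹*(1+2*p)) / t^2) := by rw [e3, e4]; ring
        _ = (2:ℝ)^(1+2*p) * t ^ X := by rw [e5]
    have htail : c₁ * a N ≤ c₁ * t ^ X := by
      apply mul_le_mul_of_nonneg_left _ hc₁0
      have e1 : a N ≤ (N:ℝ) ^ (-γ) := by
        rw [ha]
        exact Real.rpow_le_rpow_of_nonpos hN0 (by linarith) (by linarith)
      have e2 : (N:ℝ) ^ (-γ) ≤ r ^ (-γ) :=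
        Real.rpow_le_rpow_of_nonpos hr0 hrN (by linarith)
      have e3 : r ^ (-γ) = t ^ X := by
        rw [hr, ← Real.rpow_mul ht.le, hXγ]
      linarith
    calc ∑' n, f n ≤ (N:ℝ) * ((N:ℝ)^(2*p) / t^2) + c₁ * a N := htsum
      _ ≤ (2:ℝ)^(1+2*p) * t ^ X + c₁ * t ^ X := add_le_add hhead htail
      _ ≤ (K₀ + (2:ℝ)^(1+2*p) + c₁ + 1) * t ^ X := by nlinarith [htX, hK₀]

theorem kalman_variance_series_estimate (ε p C : ℝ) (hε : 0 < ε) (hp : 0 < p)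
    (hC : 1 ≤ C) (lam μ : ℕ+ → ℝ)
    (hlam : ∀ i : ℕ+, lam i = (i : ℝ) ^ (-(1 + 2 * ε)))
    (hμ : ∀ i : ℕ+, C⁻¹ ^ 2 * (i : ℝ) ^ (-(1 + 2 * ε + 2 * p)) ≤ μ i ∧
      μ i ≤ C ^ 2 * (i : ℝ) ^ (-(1 + 2 * ε + 2 * p))) :
    ∃ C' : ℝ, 0 < C' ∧ ∀ n : ℕ, 1 ≤ n → ∀ α : ℝ, 0 < α →
      (∑' i : ℕ+, (1 / α ^ 2) *
          (i : ℝ) ^ (-(1 + 2 * ε + 2 * p) - (1 + 2 * ε)) /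
          (1 + (n / α) * (i : ℝ) ^ (-(1 + 2 * ε + 2 * p))) ^ 2) ≤
        C' * (1 / (n * α)) * ((n : ℝ) / α) ^ (-(2 * ε) / (1 + 2 * ε + 2 * p)) := by
  obtain ⟨K, hK, hkey⟩ := key_series ε p hε hp
  refine ⟨K, hK, fun n hn α hα => ?_⟩
  have hn0 : (0:ℝ) < n := by exact_mod_cast hn
  have ht : (0:ℝ) < (n:ℝ)/α := div_pos hn0 hα
  have conv : (∑' i : ℕ+, (1 / α ^ 2) *
          (i : ℝ) ^ (-(1 + 2 * ε + 2 * p) - (1 + 2 * ε)) /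
          (1 + (n / α) * (i : ℝ) ^ (-(1 + 2 * ε + 2 * p))) ^ 2)
      = ∑' m : ℕ, (1 / α ^ 2) * (((m:ℝ)+1) ^ (-(1 + 2*ε + 2*p) - (1 + 2*ε)) /
      (1 + ((n:ℝ)/α) * ((m:ℝ)+1) ^ (-(1 + 2*ε + 2*p))) ^ 2) := by
    rw [← Equiv.pnatEquivNat.symm.tsum_eq]
    refine tsum_congr fun m => ?_
    have hc : ((Equiv.pnatEquivNat.symm m : ℕ+) : ℝ) = (m:ℝ) + 1 := by
      simp [Equiv.pnatEquivNat]
    rw [hc, mul_div_assoc]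
  rw [conv, tsum_mul_left]
  have hb := hkey ((n:ℝ)/α) ht
  have hrhs : K * (1 / (↑n * α)) * ((n:ℝ)/α) ^ (-(2*ε) / (1+2*ε+2*p))
      = (1/α^2) * (K * ((n:ℝ)/α) ^ ((1+2*ε+2*p)⁻¹ * -((1+2*ε+2*p)+2*ε))) := by
    have hsne : (1+2*ε+2*p) ≠ 0 := by positivity
    have eexp : (1+2*ε+2*p)⁻¹ * -((1+2*ε+2*p)+2*ε) = (-1) + (-(2*ε)/(1+2*ε+2*p)) := by
      field_simp
      ring
    rw [eexp, Real.rpow_add ht, Real.rpow_neg_one]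
    field_simp
  rw [hrhs]
  exact mul_le_mul_of_nonneg_left hb (by positivity)
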